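/- For any finite set V, any real β ≥ 0, and any function σ ↦ exp(-βH(σ)) with ferromagnetic pair interactions and nonnegative field, the first Griffiths inequality holds: for every A ⊆ V, ⟨σ_A⟩ ≥ 0, where σ_A = Π_{x∈A} σ_x and ⟨·⟩ is the Ising expectation with nonnegative coupling constants J_{x,y} ≥ 0 and magnetic field h ≥ 0. -/

import Mathlib

open Finset

/-- The spin value attached to a Boolean: `+1` or `-1`. -/
noncomputable def spin (b : Bool) : ℝ := if b then 1 else -1

/-- Boltzmann weight `exp(-βH(σ))` for the Hamiltonian
`H(σ) = -Σ_{x,y} J_{x,y} σ_x σ_y - h Σ_x σ_x`. -/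
noncomputable def isingWeight {V : Type*} [Fintype V]
    (J : V → V → ℝ) (h β : ℝ) (σ : V → Bool) : ℝ :=
  Real.exp (β * ((∑ x, ∑ y, J x y * spin (σ x) * spin (σ y)) + h * ∑ x, spin (σ x)))

/-- The Ising expectation `⟨X⟩ = Z⁻¹ Σ_σ X(σ) e^{-βH(σ)}`. -/
noncomputable def isingExpect {V : Type*} [Fintype V] [DecidableEq V]
    (J : V → V → ℝ) (h β : ℝ) (X : (V → Bool) → ℝ) : ℝ :=
  (∑ σ : V → Bool, X σ * isingWeight J h β σ) / (∑ σ : V → Bool, isingWeight J h β σ)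

lemma spin_mul_self (b : Bool) : spin b * spin b = 1 := by cases b <;> simp [spin]

section aux
variable {V : Type*} [Fintype V] [DecidableEq V]

/-- The spin monomial `σ_B`. -/
noncomputable def mono (B : Finset V) (σ : V → Bool) : ℝ := ∏ x ∈ B, spin (σ x)

lemma mono_mul (B C : Finset V) (σ : V → Bool) :
    mono B σ * mono C σ = mono (symmDiff B C) σ := by
  unfold mono
  rw [symmDiff_def, sup_eq_union, Finset.prod_union disjoint_sdiff_sdiff,
    ← Finset.prod_sdiff (Finset.inter_subset_left : B ∩ C ⊆ B),
    ← Finset.prod_sdiff (Finset.inter_subset_right : B ∩ C ⊆ C),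
    Finset.sdiff_inter_self_left, Finset.sdiff_inter_self_right]
  have h1 : (∏ x ∈ B ∩ C, spin (σ x)) * ∏ x ∈ B ∩ C, spin (σ x) = 1 := by
    rw [← Finset.prod_mul_distrib]
    simp [spin_mul_self]
  calc (∏ x ∈ B \ C, spin (σ x)) * (∏ x ∈ B ∩ C, spin (σ x)) *
        ((∏ x ∈ C \ B, spin (σ x)) * ∏ x ∈ B ∩ C, spin (σ x))
      = (∏ x ∈ B \ C, spin (σ x)) * (∏ x ∈ C \ B, spin (σ x)) *
        ((∏ x ∈ B ∩ C, spin (σ x)) * ∏ x ∈ B ∩ C, spin (σ x)) := by ring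
    _ = _ := by rw [h1, mul_one]

/-- A function on configurations is *good* if it is a nonnegative combination of
spin monomials. -/
def Good (X : (V → Bool) → ℝ) : Prop :=
  ∃ c : Finset V → ℝ, (∀ B, 0 ≤ c B) ∧ ∀ σ, X σ = ∑ B : Finset V, c B * mono B σ

lemma good_congr {X Y : (V → Bool) → ℝ} (hXY : ∀ σ, X σ = Y σ) (hX : Good X) :
    Good Y := by
  obtain ⟨c, hc, hrep⟩ := hX
  exact ⟨c, hc, fun σ => (hXY σ) ▸ hrep σ⟩

lemma good_mono (B : Finset V) : Good (mono B) := by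
  refine ⟨fun D => if D = B then 1 else 0, fun D => by positivity, fun σ => ?_⟩
  simp [Finset.sum_ite_eq]

lemma good_add {X Y : (V → Bool) → ℝ} (hX : Good X) (hY : Good Y) :
    Good (fun σ => X σ + Y σ) := by
  obtain ⟨c, hc, hcr⟩ := hX
  obtain ⟨d, hd, hdr⟩ := hY
  refine ⟨fun B => c B + d B, fun B => add_nonneg (hc B) (hd B), fun σ => ?_⟩
  simp [hcr σ, hdr σ, add_mul, Finset.sum_add_distrib]

lemma good_smul {a : ℝ} (ha : 0 ≤ a) {X : (V → Bool) → ℝ} (hX : Good X) :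
    Good (fun σ => a * X σ) := by
  obtain ⟨c, hc, hcr⟩ := hX
  refine ⟨fun B => a * c B, fun B => mul_nonneg ha (hc B), fun σ => ?_⟩
  simp [hcr σ, Finset.mul_sum, mul_assoc]

lemma good_mul {X Y : (V → Bool) → ℝ} (hX : Good X) (hY : Good Y) :
    Good (fun σ => X σ * Y σ) := by
  obtain ⟨c, hc, hcr⟩ := hX
  obtain ⟨d, hd, hdr⟩ := hY
  refine ⟨fun D => ∑ B : Finset V, ∑ C : Finset V,
      if symmDiff B C = D then c B * d C else 0,
    fun D => Finset.sum_nonneg fun B _ => Finset.sum_nonneg fun C _ => by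
      split <;> [exact mul_nonneg (hc B) (hd C); exact le_rfl], fun σ => ?_⟩
  show X σ * Y σ = _
  calc X σ * Y σ = ∑ B : Finset V, ∑ C : Finset V, c B * d C * mono (symmDiff B C) σ := by
        rw [hcr σ, hdr σ, Finset.sum_mul_sum]
        refine Finset.sum_congr rfl fun B _ => Finset.sum_congr rfl fun C _ => ?_
        rw [← mono_mul]; ring
    _ = ∑ B : Finset V, ∑ C : Finset V, ∑ D : Finset V,
          (if symmDiff B C = D then c B * d C else 0) * mono D σ := by
        refine Finset.sum_congr rfl fun B _ => Finset.sum_congr rfl fun C _ => ?_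
        simp [ite_mul]
    _ = ∑ B : Finset V, ∑ D : Finset V, ∑ C : Finset V,
          (if symmDiff B C = D then c B * d C else 0) * mono D σ :=
        Finset.sum_congr rfl fun B _ => Finset.sum_comm
    _ = ∑ D : Finset V, ∑ B : Finset V, ∑ C : Finset V,
          (if symmDiff B C = D then c B * d C else 0) * mono D σ := Finset.sum_comm
    _ = _ := by simp only [Finset.sum_mul]

lemma good_sum {ι : Type*} (s : Finset ι) (X : ι → (V → Bool) → ℝ)
    (hX : ∀ i ∈ s, Good (X i)) : Good (fun σ => ∑ i ∈ s, X i σ) := by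
  induction s using Finset.cons_induction with
  | empty => exact good_congr (fun σ => by simp) (good_smul le_rfl (good_mono ∅))
  | cons a s hni ih =>
    refine good_congr (fun σ => (Finset.sum_cons hni).symm) ?_
    exact good_add (hX a (Finset.mem_cons_self a s))
      (ih fun i hi => hX i (Finset.mem_cons_of_mem hi))

lemma good_one : Good (fun _ : V → Bool => (1 : ℝ)) :=
  good_congr (fun σ => by simp [mono]) (good_mono ∅)

lemma good_pow {X : (V → Bool) → ℝ} (hX : Good X) (n : ℕ) :
    Good (fun σ => X σ ^ n) := by
  induction n with
  | zero => exact good_congr (fun σ => (pow_zero _).symm) good_one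
  | succ n ih =>
    exact good_congr (fun σ => (pow_succ _ _).symm) (good_mul ih hX)

lemma sum_mono_nonneg (B : Finset V) : 0 ≤ ∑ σ : V → Bool, mono B σ := by
  have h1 : ∀ σ : V → Bool, mono B σ = ∏ x : V, (if x ∈ B then spin (σ x) else 1) := by
    intro σ
    rw [Finset.prod_ite_mem, Finset.univ_inter]
    rfl
  simp_rw [h1]
  rw [← Fintype.piFinset_univ,
    ← Finset.prod_univ_sum (fun _ => (univ : Finset Bool))
      (fun x b => if x ∈ B then spin b else 1)]
  refine Finset.prod_nonneg fun x _ => ?_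
  rw [Fintype.sum_bool]
  split_ifs <;> norm_num [spin]

lemma inner_nonneg (A : Finset V) {X : (V → Bool) → ℝ} (hX : Good X) :
    0 ≤ ∑ σ : V → Bool, mono A σ * X σ := by
  obtain ⟨c, hc, hcr⟩ := hX
  calc (0:ℝ) ≤ ∑ B : Finset V, c B * ∑ σ : V → Bool, mono (symmDiff A B) σ :=
        Finset.sum_nonneg fun B _ => mul_nonneg (hc B) (sum_mono_nonneg _)
    _ = ∑ B : Finset V, ∑ σ : V → Bool, c B * mono (symmDiff A B) σ := by
        simp [Finset.mul_sum]
    _ = ∑ σ : V → Bool, ∑ B : Finset V, c B * mono (symmDiff A B) σ := Finset.sum_comm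
    _ = ∑ σ : V → Bool, mono A σ * X σ := by
        refine Finset.sum_congr rfl fun σ _ => ?_
        rw [hcr σ, Finset.mul_sum]
        refine Finset.sum_congr rfl fun B _ => ?_
        rw [← mono_mul]; ring

end aux

/-- **First Griffiths inequality**. -/
theorem griffiths_first_inequality {V : Type*} [Fintype V] [DecidableEq V]
    (J : V → V → ℝ) (h β : ℝ) (hJ : ∀ x y, 0 ≤ J x y) (hh : 0 ≤ h) (hβ : 0 ≤ β)
    (A : Finset V) :
    0 ≤ isingExpect J h β (fun σ => ∏ x ∈ A, spin (σ x)) := by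
  set F : (V → Bool) → ℝ := fun σ =>
    β * ((∑ x, ∑ y, J x y * spin (σ x) * spin (σ y)) + h * ∑ x, spin (σ x)) with hF
  have hGoodF : Good F := by
    refine good_smul hβ (good_add ?_ (good_smul hh ?_))
    · refine good_sum _ _ fun x _ => good_sum _ _ fun y _ => ?_
      refine good_congr (fun σ => ?_) (good_smul (hJ x y)
        (good_mul (good_mono {x}) (good_mono {y})))
      simp [mono]; ring
    · refine good_sum _ _ fun x _ => good_congr (fun σ => ?_) (good_mono {x})
      simp [mono]
  have hGoodPow : ∀ n : ℕ, Good (fun σ => F σ ^ n / n.factorial) := by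
    intro n
    refine good_congr (fun σ => ?_) (good_smul (a := ((n.factorial : ℝ))⁻¹)
      (by positivity) (good_pow hGoodF n))
    rw [div_eq_inv_mul]
  have hterm : ∀ n : ℕ, 0 ≤ ∑ σ : V → Bool, mono A σ * (F σ ^ n / n.factorial) :=
    fun n => inner_nonneg A (hGoodPow n)
  have hs : ∀ σ : V → Bool,
      HasSum (fun n : ℕ => mono A σ * (F σ ^ n / n.factorial))
        (mono A σ * Real.exp (F σ)) := fun σ =>
    (Real.exp_eq_exp_ℝ ▸ NormedSpace.expSeries_div_hasSum_exp (F σ)).mul_left _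
  have H : HasSum (fun n : ℕ => ∑ σ : V → Bool, mono A σ * (F σ ^ n / n.factorial))
      (∑ σ : V → Bool, mono A σ * Real.exp (F σ)) :=
    hasSum_sum fun σ _ => hs σ
  have hnum : 0 ≤ ∑ σ : V → Bool, mono A σ * Real.exp (F σ) := by
    rw [← H.tsum_eq]
    exact tsum_nonneg hterm
  have hden : 0 < ∑ σ : V → Bool, isingWeight J h β σ :=
    Finset.sum_pos (fun σ _ => Real.exp_pos _) Finset.univ_nonempty
  unfold isingExpect
  refine div_nonneg ?_ hden.le
  convert hnum using 2 with σ <;> rfl
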